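/- Let G be a countable amenable group and A a finite alphabet. The topological entropy function x ↦ h_top(closure of the G-orbit of x, G) on A^G is continuous with respect to the pseudometric D*(x, x') = upper Banach density of {g ∈ G : x_g ≠ x'_g}. Quantitatively: for every ε > 0 there is δ ∈ (0,1/4) such that E_S(2δ) < ε and D*(x,x') < δ implies |h_top(closure Gx) − h_top(closure Gx')| ≤ 2δ log|A| + log 2 · E_S(2δ). -/

import Mathlib

open Filter
open scoped symmDiff

/-- The upper Banach density `D*(A) = inf_{F finite nonempty} sup_{g ∈ G} |A ∩ Fg|/|F|`. -/
noncomputable def upperBanachDensity {G : Type*} [Group G] (A : Set G) : ℝ :=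
  ⨅ F : {F : Finset G // F.Nonempty},
    ⨆ g : G, ((A ∩ ((fun f => f * g) '' (F.1 : Set G))).ncard : ℝ) / F.1.card

/-- The number of patterns of shape `F` occurring in the configuration `x : G → A`
(with the shift `(g·x)(h) = x(hg)`, the pattern at position `g` is `f ↦ x (f * g)`). -/
noncomputable def numPatterns {G A : Type*} [Group G] (x : G → A) (F : Finset G) : ℕ :=
  Set.ncard {p : {a : G // a ∈ F} → A | ∃ g : G, ∀ f : {a : G // a ∈ F}, p f = x (f.1 * g)}

/-- The topological entropy of the orbit closure of `x`, computed along the Følner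
sequence `F` as `lim log|B_{F n}(x)| / |F n|`. -/
noncomputable def orbitEntropy {G A : Type*} [Group G] (F : ℕ → Finset G) (x : G → A) : ℝ :=
  Filter.limsup (fun n => Real.log (numPatterns x (F n)) / (F n).card) atTop

/-- The binary entropy function `E_S(t) = −t log₂ t − (1−t) log₂(1−t)`. -/
noncomputable def binEntropy (t : ℝ) : ℝ :=
  -t * Real.logb 2 t - (1 - t) * Real.logb 2 (1 - t)

/-- For a countable amenable group `G` and a finite alphabet `A`, the
entropy of the orbit closure is continuous on `A^G` with respect to the pseudometric
`D*(x,x') = D*({g : x g ≠ x' g})`; quantitatively, for every `ε > 0` there is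
`δ ∈ (0, 1/4)` with `E_S(2δ) < ε` such that `D*(x,x') < δ` implies
`|h(x) − h(x')| ≤ 2δ log|A| + log 2 · E_S(2δ)`. -/




lemma binEntropy_eq (t : ℝ) : binEntropy t = Real.binEntropy t / Real.log 2 := by
  simp [binEntropy, Real.binEntropy, Real.logb, Real.log_inv]
  ring

section pat
variable {G A : Type*} [Group G] [Finite A] (x : G → A) (F : Finset G)

lemma patset_finite : {p : {a : G // a ∈ F} → A | ∃ g : G, ∀ f : {a : G // a ∈ F}, p f = x (f.1 * g)}.Finite :=
  Set.toFinite _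

lemma numPatterns_pos : 0 < numPatterns x F := by
  rw [numPatterns, Set.ncard_pos (patset_finite x F)]
  exact ⟨fun f => x f.1, 1, fun f => by simp⟩

lemma numPatterns_le : numPatterns x F ≤ Nat.card A ^ F.card := by
  have h := Set.ncard_le_ncard (Set.subset_univ
    {p : {a : G // a ∈ F} → A | ∃ g : G, ∀ f : {a : G // a ∈ F}, p f = x (f.1 * g)})
    Set.finite_univ
  rw [Set.ncard_univ, Nat.card_fun] at h
  rw [numPatterns]
  simpa [Nat.card_eq_fintype_card] using h

end pat

lemma sum_choose_le_exp (n m : ℕ) (p : ℝ) (hp0 : 0 < p) (hp : p ≤ 1/2)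
    (hm : (m : ℝ) ≤ p * n) :
    Real.log (∑ k ∈ Finset.range (m+1), (n.choose k : ℝ)) ≤ n * Real.binEntropy p := by
  set q : ℝ := 1 - p with hq
  have hq0 : 0 < q := by rw [hq]; linarith
  have hpq : p ≤ q := by rw [hq]; linarith
  have hmn : m ≤ n := by
    have : (m : ℝ) ≤ n := le_trans hm (by nlinarith [Nat.cast_nonneg (α := ℝ) n])
    exact_mod_cast this
  -- key: sum * p^m * q^(n-m) ≤ 1
  have key : (∑ k ∈ Finset.range (m+1), (n.choose k : ℝ)) * (p^m * q^(n-m)) ≤ 1 := by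
    have h1 : (∑ k ∈ Finset.range (m+1), (n.choose k : ℝ) * (p^m * q^(n-m)))
        ≤ ∑ k ∈ Finset.range (m+1), (n.choose k : ℝ) * (p^k * q^(n-k)) := by
      apply Finset.sum_le_sum
      intro k hk
      have hkm : k ≤ m := Nat.lt_succ_iff.mp (Finset.mem_range.mp hk)
      have hkn : k ≤ n := le_trans hkm hmn
      apply mul_le_mul_of_nonneg_left _ (Nat.cast_nonneg _)
      have e1 : p ^ m = p ^ k * p ^ (m - k) := by rw [← pow_add]; congr 1; omega
      have e2 : q ^ (n - k) = q ^ (n - m) * q ^ (m - k) := by rw [← pow_add]; congr 1; omega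
      rw [e1, e2]
      have : p ^ (m-k) ≤ q ^ (m-k) := pow_le_pow_left₀ hp0.le hpq _
      calc p ^ k * p ^ (m - k) * q ^ (n - m) ≤ p ^ k * q ^ (m - k) * q ^ (n - m) := by
            apply mul_le_mul_of_nonneg_right _ (pow_nonneg hq0.le _)
            exact mul_le_mul_of_nonneg_left this (pow_nonneg hp0.le _)
        _ = p ^ k * (q ^ (n - m) * q ^ (m - k)) := by ring
    have h2 : (∑ k ∈ Finset.range (m+1), (n.choose k : ℝ) * (p^k * q^(n-k))) ≤ 1 := by
      have hb : (∑ k ∈ Finset.range (n+1), (n.choose k : ℝ) * (p^k * q^(n-k))) = 1 := by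
        have := add_pow p q n
        rw [show p + q = 1 by rw [hq]; ring, one_pow] at this
        rw [this]
        apply Finset.sum_congr rfl
        intro k hk; ring
      rw [← hb]
      apply Finset.sum_le_sum_of_subset_of_nonneg
      · exact Finset.range_subset_range.mpr (by omega)
      · intro k _ _
        positivity
    calc (∑ k ∈ Finset.range (m+1), (n.choose k : ℝ)) * (p^m * q^(n-m))
        = ∑ k ∈ Finset.range (m+1), (n.choose k : ℝ) * (p^m * q^(n-m)) := by
          rw [Finset.sum_mul]
      _ ≤ 1 := le_trans h1 h2
  have hSpos : (0:ℝ) < ∑ k ∈ Finset.range (m+1), (n.choose k : ℝ) := by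
    apply Finset.sum_pos' (fun k _ => Nat.cast_nonneg _)
    exact ⟨0, Finset.mem_range.mpr (by omega), by simp⟩
  have hS : (∑ k ∈ Finset.range (m+1), (n.choose k : ℝ)) ≤ p⁻¹^m * q⁻¹^(n-m) := by
    have hc : (0:ℝ) < p ^ m * q ^ (n - m) := by positivity
    rw [inv_pow, inv_pow, ← mul_inv, ← one_div]
    exact (le_div_iff₀ hc).mpr key
  have hlog : Real.log (∑ k ∈ Finset.range (m+1), (n.choose k : ℝ))
      ≤ (m : ℝ) * Real.log p⁻¹ + ((n : ℝ) - m) * Real.log q⁻¹ := by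
    calc Real.log (∑ k ∈ Finset.range (m+1), (n.choose k : ℝ))
        ≤ Real.log (p⁻¹^m * q⁻¹^(n-m)) := Real.log_le_log hSpos hS
      _ = (m : ℝ) * Real.log p⁻¹ + ((n - m : ℕ) : ℝ) * Real.log q⁻¹ := by
          rw [Real.log_mul (by positivity) (by positivity), Real.log_pow, Real.log_pow]
      _ = (m : ℝ) * Real.log p⁻¹ + ((n : ℝ) - m) * Real.log q⁻¹ := by
          rw [Nat.cast_sub hmn]
  refine le_trans hlog ?_
  rw [Real.binEntropy, ← hq]
  have hlq : Real.log q⁻¹ ≤ Real.log p⁻¹ := by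
    apply Real.log_le_log (by positivity)
    exact (inv_le_inv₀ hq0 hp0).mpr hpq
  have hq1 : q⁻¹ ≥ 1 := by
    rw [ge_iff_le, le_inv_comm₀ one_pos hq0]; rw [hq]; linarith
  have hlq0 : 0 ≤ Real.log q⁻¹ := Real.log_nonneg hq1
  nlinarith [hm, hlq, hlq0]

lemma card_small_subsets {T : Type*} [Fintype T] [DecidableEq T] (m : ℕ) :
    Nat.card {D : Finset T // D.card ≤ m} ≤ ∑ k ∈ Finset.range (m+1), (Fintype.card T).choose k := by
  classical
  rw [Nat.card_eq_fintype_card, Fintype.card_subtype]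
  have he : (Finset.univ.filter (fun D : Finset T => D.card ≤ m))
      = (Finset.range (m+1)).biUnion (fun k => Finset.powersetCard k Finset.univ) := by
    ext D
    simp [Finset.mem_powersetCard_univ, Nat.lt_succ_iff]
  rw [he, Finset.card_biUnion]
  · apply le_of_eq
    apply Finset.sum_congr rfl
    intro k _
    rw [Finset.card_powersetCard, Finset.card_univ]
  · intro i _ j _ hij
    simp only [Finset.disjoint_left]
    intro D hD hD'
    rw [Finset.mem_powersetCard_univ] at hD hD'
    exact hij (hD ▸ hD')

private noncomputable def recon {T A : Type*} [Fintype T] [DecidableEq T] [Nonempty A] {m : ℕ}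
    (p : T → A) (D : Finset T) (w : Fin m → A) : T → A := fun f =>
  if hf : f ∈ D then
    (if h2 : ((Fintype.equivFinOfCardEq (Fintype.card_coe D)) ⟨f, hf⟩ : ℕ) < m then
      w ⟨_, h2⟩ else p f)
  else p f

lemma numPatterns_le_mul {G A : Type*} [Group G] [Finite A] [Nonempty A] [DecidableEq G]
    (x x' : G → A) (F : Finset G) (m : ℕ)
    (hm : ∀ g : G, Set.ncard {f : {a : G // a ∈ F} | x (f.1 * g) ≠ x' (f.1 * g)} ≤ m) :
    numPatterns x' F ≤
      numPatterns x F * (∑ k ∈ Finset.range (m+1), (F.card).choose k) * Nat.card A ^ m := by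
  classical
  set T := {a : G // a ∈ F}
  set P : Set (T → A) := {p | ∃ g : G, ∀ f : T, p f = x (f.1 * g)} with hP
  set P' : Set (T → A) := {p | ∃ g : G, ∀ f : T, p f = x' (f.1 * g)} with hP'
  -- the injection
  have : ∃ Φ : ↥P' → ↥P × {D : Finset T // D.card ≤ m} × (Fin m → A),
      Function.Injective Φ := by
    have hcomp : ∀ q : ↥P', ∃ (p : ↥P) (D : {D : Finset T // D.card ≤ m}) (w : Fin m → A),
        recon p.1 D.1 w = q.1 := by
      intro q
      obtain ⟨g, hg⟩ := q.2
      have hDfin : {f : T | x (f.1 * g) ≠ x' (f.1 * g)}.Finite := Set.toFinite _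
      set D : Finset T := hDfin.toFinset with hDdef
      have hDmem : ∀ f : T, f ∈ D ↔ x (f.1 * g) ≠ x' (f.1 * g) := by
        intro f; rw [hDdef, Set.Finite.mem_toFinset]; rfl
      have hDcard : D.card ≤ m := by
        rw [hDdef, ← Set.ncard_eq_toFinset_card _ hDfin]; exact hm g
      set eD := Fintype.equivFinOfCardEq (Fintype.card_coe D) with heD
      refine ⟨⟨fun f => x (f.1 * g), g, fun f => rfl⟩, ⟨D, hDcard⟩,
        fun i => if h : (i : ℕ) < D.card then q.1 (eD.symm ⟨i.1, h⟩).1 else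
          Classical.arbitrary A, ?_⟩
      funext f
      by_cases hf : f ∈ D
      · simp only [recon, dif_pos hf]
        have hlt : ((eD ⟨f, hf⟩ : Fin D.card) : ℕ) < D.card := (eD ⟨f, hf⟩).2
        have hltm : ((eD ⟨f, hf⟩ : Fin D.card) : ℕ) < m := lt_of_lt_of_le hlt hDcard
        rw [dif_pos hltm, dif_pos hlt]
        have : (⟨((eD ⟨f, hf⟩ : Fin D.card) : ℕ), hlt⟩ : Fin D.card) = eD ⟨f, hf⟩ :=
          Fin.ext rfl
        rw [this, Equiv.symm_apply_apply]
      · simp only [recon, dif_neg hf]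
        have : x (f.1 * g) = x' (f.1 * g) := by
          by_contra hne
          exact hf ((hDmem f).mpr hne)
        rw [this, ← hg f]
    choose p D w hrec using hcomp
    refine ⟨fun q => (p q, D q, w q), ?_⟩
    intro q₁ q₂ heq
    have h1 : p q₁ = p q₂ := congrArg Prod.fst heq
    have h2 : D q₁ = D q₂ := congrArg (fun z => z.2.1) heq
    have h3 : w q₁ = w q₂ := congrArg (fun z => z.2.2) heq
    apply Subtype.ext
    rw [← hrec q₁, ← hrec q₂, h1, h2, h3]
  obtain ⟨Φ, hΦ⟩ := this
  have hcard := Nat.card_le_card_of_injective Φ hΦ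
  rw [Nat.card_prod, Nat.card_prod] at hcard
  have e1 : Nat.card ↥P' = numPatterns x' F := Nat.card_coe_set_eq _
  have e2 : Nat.card ↥P = numPatterns x F := Nat.card_coe_set_eq _
  have e3 : Nat.card (Fin m → A) = Nat.card A ^ m := by
    rw [Nat.card_fun, Nat.card_eq_fintype_card (α := Fin m), Fintype.card_fin]
  have e4 : Nat.card {D : Finset T // D.card ≤ m}
      ≤ ∑ k ∈ Finset.range (m+1), (F.card).choose k := by
    have := card_small_subsets (T := T) m
    rwa [Fintype.card_coe] at this
  calc numPatterns x' F = Nat.card ↥P' := e1.symm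
    _ ≤ Nat.card ↥P * (Nat.card {D : Finset T // D.card ≤ m} * Nat.card (Fin m → A)) := hcard
    _ ≤ numPatterns x F * ((∑ k ∈ Finset.range (m+1), (F.card).choose k) * Nat.card A ^ m) := by
        rw [e2, e3]
        exact Nat.mul_le_mul_left _ (Nat.mul_le_mul_right _ e4)
    _ = _ := by ring

lemma density_transfer {G : Type*} [Group G] [DecidableEq G] (T : Set G) (F0 : Finset G)
    (h0 : F0.Nonempty) (δ : ℝ) (hδ0 : 0 ≤ δ) (hδ1 : δ ≤ 1)
    (hT : ∀ g : G, ((T ∩ ((fun f => f * g) '' (F0 : Set G))).ncard : ℝ) ≤ δ * F0.card)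
    (E : Finset G) :
    ((T ∩ (E : Set G)).ncard : ℝ) ≤ δ * E.card +
      ∑ a ∈ F0, ∑ b ∈ F0, (((E.image ((b * a⁻¹) * ·)) ∆ E).card : ℝ) := by
  classical
  set TE := E.filter (· ∈ T) with hTE
  have hTEcard : (T ∩ (E : Set G)).ncard = TE.card := by
    rw [← Set.ncard_coe_finset]
    congr 1
    ext s
    simp [hTE, and_comm]
  rw [hTEcard]
  set G0 := E.biUnion (fun s => F0.image (fun a => a⁻¹ * s)) with hG0
  -- double counting
  have claim1 : ∑ g ∈ G0, (TE.filter (fun s => s * g⁻¹ ∈ F0)).card = TE.card * F0.card := by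
    have : ∀ g, (TE.filter (fun s => s * g⁻¹ ∈ F0)).card
        = ∑ s ∈ TE, if s * g⁻¹ ∈ F0 then 1 else 0 := by
      intro g; rw [Finset.card_filter]
    simp only [this]
    rw [Finset.sum_comm]
    have hfib : ∀ s ∈ TE, (∑ g ∈ G0, if s * g⁻¹ ∈ F0 then 1 else 0) = F0.card := by
      intro s hs
      have hsE : s ∈ E := (Finset.mem_filter.mp hs).1
      have : (G0.filter (fun g => s * g⁻¹ ∈ F0)) = F0.image (fun a => a⁻¹ * s) := by
        ext g
        constructor
        · intro hg
          obtain ⟨hgG0, hgf⟩ := Finset.mem_filter.mp hg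
          refine Finset.mem_image.mpr ⟨s * g⁻¹, hgf, ?_⟩
          group
        · intro hg
          obtain ⟨a, haF0, rfl⟩ := Finset.mem_image.mp hg
          refine Finset.mem_filter.mpr ⟨?_, ?_⟩
          · exact Finset.mem_biUnion.mpr ⟨s, hsE, Finset.mem_image.mpr ⟨a, haF0, rfl⟩⟩
          · have : s * (a⁻¹ * s)⁻¹ = a := by group
            rw [this]; exact haF0
      rw [← Finset.card_filter, this, Finset.card_image_of_injective]
      intro u v huv
      exact inv_injective (mul_right_cancel huv)
    rw [Finset.sum_congr rfl hfib, Finset.sum_const, smul_eq_mul]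
  -- each fiber is small
  have claim2 : ∀ g : G, ((TE.filter (fun s => s * g⁻¹ ∈ F0)).card : ℝ) ≤ δ * F0.card := by
    intro g
    refine le_trans ?_ (hT g)
    have hsub : ↑(TE.filter (fun s => s * g⁻¹ ∈ F0)) ⊆ T ∩ ((fun f => f * g) '' (F0 : Set G)) := by
      intro s hs
      simp only [Finset.coe_filter, Set.mem_setOf_eq, hTE, Finset.mem_filter] at hs
      obtain ⟨⟨hsE, hsT⟩, hsF⟩ := hs
      refine ⟨hsT, ⟨s * g⁻¹, hsF, by group⟩⟩
    have hfin : (T ∩ ((fun f => f * g) '' (F0 : Set G))).Finite :=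
      Set.Finite.subset (((F0 : Set G).toFinite).image _) Set.inter_subset_right
    have := Set.ncard_le_ncard hsub hfin
    rw [Set.ncard_coe_finset] at this
    exact_mod_cast Nat.cast_le.mpr this
  -- boundary decomposition
  set Gin := G0.filter (fun g => ∀ a ∈ F0, a * g ∈ E) with hGin
  set Gbd := G0.filter (fun g => ¬ ∀ a ∈ F0, a * g ∈ E) with hGbd
  have hsplit : Gin.card + Gbd.card = G0.card := Finset.card_filter_add_card_filter_not _
  have hGinE : Gin.card ≤ E.card := by
    obtain ⟨a₀, ha₀⟩ := h0
    apply Finset.card_le_card_of_injOn (fun g => a₀ * g)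
    · intro g hg
      exact (Finset.mem_filter.mp hg).2 a₀ ha₀
    · intro g₁ _ g₂ _ h
      exact mul_left_cancel h
  have hGbd : (Gbd.card : ℝ) ≤ ∑ a ∈ F0, ∑ b ∈ F0, (((E.image ((b * a⁻¹) * ·)) ∆ E).card : ℝ) := by
    have hsub : Gbd ⊆ (F0 ×ˢ F0).biUnion
        (fun ab => (E.image (ab.1⁻¹ * ·)) \ (E.image (ab.2⁻¹ * ·))) := by
      intro g hg
      obtain ⟨hgG0, hbad⟩ := Finset.mem_filter.mp hg
      obtain ⟨s, hsE, hsim⟩ := Finset.mem_biUnion.mp hgG0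
      obtain ⟨a, haF0, rfl⟩ := Finset.mem_image.mp hsim
      push_neg at hbad
      obtain ⟨b, hbF0, hbg⟩ := hbad
      refine Finset.mem_biUnion.mpr ⟨(a, b), Finset.mem_product.mpr ⟨haF0, hbF0⟩, ?_⟩
      rw [Finset.mem_sdiff]
      constructor
      · exact Finset.mem_image.mpr ⟨s, hsE, rfl⟩
      · intro hmem
        obtain ⟨e, heE, he⟩ := Finset.mem_image.mp hmem
        apply hbg
        rw [← he]
        simpa [← mul_assoc] using heE
    have h1 : (Gbd.card : ℝ) ≤ ∑ ab ∈ F0 ×ˢ F0,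
        (((E.image (ab.1⁻¹ * ·)) \ (E.image (ab.2⁻¹ * ·))).card : ℝ) := by
      have := le_trans (Finset.card_le_card hsub) (Finset.card_biUnion_le)
      exact_mod_cast this
    refine le_trans h1 ?_
    rw [Finset.sum_product]
    apply Finset.sum_le_sum; intro a haF0
    apply Finset.sum_le_sum; intro b hbF0
    -- |a⁻¹E \ b⁻¹E| = |ba⁻¹E \ E| ≤ |ba⁻¹E ∆ E|
    have hinj : Function.Injective ((b : G) * ·) := fun u v h => mul_left_cancel h
    have hcard : ((E.image ((a : G)⁻¹ * ·)) \ (E.image ((b : G)⁻¹ * ·))).card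
        = ((E.image ((b * a⁻¹) * ·)) \ E).card := by
      rw [← Finset.card_image_of_injective _ hinj, Finset.image_sdiff _ _ hinj]
      rw [Finset.image_image, Finset.image_image]
      have h1 : ((b : G) * ·) ∘ ((a : G)⁻¹ * ·) = (((b * a⁻¹) * ·) : G → G) := by
        funext u; simp [mul_assoc]
      have h2 : ((b : G) * ·) ∘ ((b : G)⁻¹ * ·) = (id : G → G) := by
        funext u; simp [← mul_assoc]
      rw [h1, h2, Finset.image_id]
    rw [hcard]
    have : (E.image ((b * a⁻¹) * ·)) \ E ⊆ (E.image ((b * a⁻¹) * ·)) ∆ E := by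
      rw [symmDiff_def]
      exact Finset.subset_union_left
    exact_mod_cast Nat.cast_le.mpr (Finset.card_le_card this)
  -- put it together
  have hF0pos : (0 : ℝ) < F0.card := by exact_mod_cast Finset.card_pos.mpr h0
  have main : (TE.card : ℝ) * F0.card ≤ (δ * G0.card) * F0.card := by
    have heq : (TE.card : ℝ) * F0.card
        = ∑ g ∈ G0, ((TE.filter (fun s => s * g⁻¹ ∈ F0)).card : ℝ) := by
      have h := congrArg (Nat.cast (R := ℝ)) claim1
      push_cast at h
      exact h.symm
    rw [heq]
    calc ∑ g ∈ G0, ((TE.filter (fun s => s * g⁻¹ ∈ F0)).card : ℝ)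
        ≤ ∑ _g ∈ G0, δ * F0.card := Finset.sum_le_sum (fun g _ => claim2 g)
      _ = (δ * G0.card) * F0.card := by rw [Finset.sum_const, nsmul_eq_mul]; ring
  have hTEle : (TE.card : ℝ) ≤ δ * G0.card := le_of_mul_le_mul_right main hF0pos
  have hG0card : (G0.card : ℝ) ≤ E.card + Gbd.card := by
    have : G0.card ≤ E.card + Gbd.card := by omega
    exact_mod_cast this
  calc (TE.card : ℝ) ≤ δ * G0.card := hTEle
    _ ≤ δ * (E.card + Gbd.card) := by nlinarith
    _ = δ * E.card + δ * Gbd.card := by ring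
    _ ≤ δ * E.card + Gbd.card := by nlinarith [Nat.cast_nonneg (α := ℝ) Gbd.card]
    _ ≤ _ := by linarith [hGbd]




lemma orbitEntropy_le_aux {G A : Type*} [Group G] [Countable G] [DecidableEq G] [Finite A]
    (F : ℕ → Finset G) (hne : ∀ n, (F n).Nonempty)
    (hF : ∀ a : G, Tendsto
      (fun n => ((((F n).image (a * ·)) ∆ (F n)).card : ℝ) / (F n).card) atTop (nhds 0))
    (δ : ℝ) (hδ0 : 0 < δ) (hδ4 : δ < 1/4)
    (x x' : G → A) (hxx : upperBanachDensity {g : G | x g ≠ x' g} < δ) :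
    orbitEntropy F x' ≤ orbitEntropy F x +
      (2 * δ * Real.log (Nat.card A) + Real.log 2 * binEntropy (2 * δ)) := by
  classical
  have : Nonempty A := ⟨x 1⟩
  have hA1 : 1 ≤ Nat.card A := Nat.card_pos
  have hlogA : (0:ℝ) ≤ Real.log (Nat.card A) := Real.log_nonneg (by exact_mod_cast hA1)
  set S : Set G := {g : G | x g ≠ x' g} with hS
  set C : ℝ := 2 * δ * Real.log (Nat.card A) + Real.log 2 * binEntropy (2 * δ) with hC
  have hCalt : C = 2 * δ * Real.log (Nat.card A) + Real.binEntropy (2 * δ) := by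
    rw [hC, binEntropy_eq]
    field_simp
  -- Step 1: extract a good Følner-test set F0
  have : Nonempty {F : Finset G // F.Nonempty} := ⟨⟨{1}, Finset.singleton_nonempty 1⟩⟩
  obtain ⟨⟨F0, h0⟩, hsup⟩ := exists_lt_of_ciInf_lt hxx
  have hF0pos : (0:ℝ) < F0.card := by exact_mod_cast Finset.card_pos.mpr h0
  have hv : ∀ g : G, ((S ∩ ((fun f => f * g) '' (F0 : Set G))).ncard : ℝ) ≤ δ * F0.card := by
    intro g
    have hbdd : BddAbove (Set.range (fun g : G =>
        ((S ∩ ((fun f => f * g) '' (F0 : Set G))).ncard : ℝ) / F0.card)) := by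
      refine ⟨1, ?_⟩
      rintro _ ⟨g, rfl⟩
      have h1 : (S ∩ ((fun f => f * g) '' (F0 : Set G))).ncard ≤ F0.card := by
        have := Set.ncard_le_ncard (Set.inter_subset_right
          (s := S) (t := ((fun f => f * g) '' (F0 : Set G))))
          (((F0 : Set G).toFinite).image _)
        refine le_trans this ?_
        rw [Set.ncard_image_of_injective _ (fun u v h => mul_right_cancel h),
          Set.ncard_coe_finset]
      rw [div_le_one hF0pos]
      exact_mod_cast h1
    have := lt_of_le_of_lt (le_ciSup hbdd g) hsup
    rw [div_lt_iff₀ hF0pos] at this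
    linarith
  -- Step 4: the Følner sums eventually small
  have hβ : Tendsto (fun n => ∑ a ∈ F0, ∑ b ∈ F0,
      ((((F n).image ((b * a⁻¹) * ·)) ∆ (F n)).card : ℝ) / (F n).card) atTop (nhds 0) := by
    have := tendsto_finset_sum F0 (fun a (_ : a ∈ F0) =>
      tendsto_finset_sum F0 (fun b (_ : b ∈ F0) => hF (b * a⁻¹)))
    simpa using this
  have hev : ∀ᶠ n in atTop, ∑ a ∈ F0, ∑ b ∈ F0,
      ((((F n).image ((b * a⁻¹) * ·)) ∆ (F n)).card : ℝ) ≤ δ * (F n).card := by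
    filter_upwards [hβ.eventually (gt_mem_nhds hδ0)] with n hn
    have hcard : (0:ℝ) < (F n).card := by exact_mod_cast Finset.card_pos.mpr (hne n)
    have : (∑ a ∈ F0, ∑ b ∈ F0,
        ((((F n).image ((b * a⁻¹) * ·)) ∆ (F n)).card : ℝ)) / (F n).card < δ := by
      rw [Finset.sum_div]
      simpa only [Finset.sum_div] using hn
    have := (div_lt_iff₀ hcard).mp this
    linarith
  -- Step 5: eventual per-n inequality
  have hmain : ∀ᶠ n in atTop,
      Real.log (numPatterns x' (F n)) / (F n).card
        ≤ Real.log (numPatterns x (F n)) / (F n).card + C := by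
    filter_upwards [hev] with n hn
    set E := F n with hE
    have hcard0 : 0 < E.card := Finset.card_pos.mpr (hne n)
    have hcard : (0:ℝ) < E.card := by exact_mod_cast hcard0
    set m : ℕ := ⌊2 * δ * E.card⌋₊ with hm
    have hmle : (m : ℝ) ≤ 2 * δ * E.card := Nat.floor_le (by positivity)
    -- diff count bound for every position h
    have hdiff : ∀ h : G,
        Set.ncard {f : {a : G // a ∈ E} | x (f.1 * h) ≠ x' (f.1 * h)} ≤ m := by
      intro h
      set Th : Set G := {u : G | x (u * h) ≠ x' (u * h)} with hTh
      have hval : Subtype.val '' {f : {a : G // a ∈ E} | x (f.1 * h) ≠ x' (f.1 * h)}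
          = Th ∩ (E : Set G) := by
        ext u
        constructor
        · rintro ⟨⟨u, hu⟩, hmem, rfl⟩
          exact ⟨hmem, hu⟩
        · rintro ⟨h1, h2⟩
          exact ⟨⟨u, h2⟩, h1, rfl⟩
      have hncardeq : Set.ncard {f : {a : G // a ∈ E} | x (f.1 * h) ≠ x' (f.1 * h)}
          = (Th ∩ (E : Set G)).ncard := by
        rw [← hval, Set.ncard_image_of_injective _ Subtype.val_injective]
      -- Th satisfies the density hypothesis
      have hThv : ∀ g : G, ((Th ∩ ((fun f => f * g) '' (F0 : Set G))).ncard : ℝ)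
          ≤ δ * F0.card := by
        intro g
        have himg : (fun u => u * h) '' (Th ∩ ((fun f => f * g) '' (F0 : Set G)))
            = S ∩ ((fun f => f * (g * h)) '' (F0 : Set G)) := by
          ext u
          constructor
          · rintro ⟨v, ⟨hv1, ⟨a, haF0, rfl⟩⟩, rfl⟩
            exact ⟨hv1, ⟨a, haF0, by group⟩⟩
          · rintro ⟨hu1, ⟨a, haF0, rfl⟩⟩
            refine ⟨a * g, ⟨?_, ⟨a, haF0, rfl⟩⟩, by group⟩
            show x (a * g * h) ≠ x' (a * g * h)
            rw [mul_assoc]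
            exact hu1
        have := hv (g * h)
        rw [← himg, Set.ncard_image_of_injective _ (fun u v hh => mul_right_cancel hh)]
          at this
        exact this
      have := density_transfer Th F0 h0 δ hδ0.le (by linarith) hThv E
      rw [hncardeq]
      apply Nat.le_floor
      push_cast
      calc ((Th ∩ (E : Set G)).ncard : ℝ)
          ≤ δ * E.card + ∑ a ∈ F0, ∑ b ∈ F0,
            (((E.image ((b * a⁻¹) * ·)) ∆ E).card : ℝ) := this
        _ ≤ δ * E.card + δ * E.card := by linarith [hn]
        _ = 2 * δ * E.card := by ring
    -- apply the pattern-counting lemma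
    have hpat := numPatterns_le_mul x x' E m (fun g => hdiff g)
    -- logs
    have hN1 : 1 ≤ numPatterns x E := numPatterns_pos x E
    have hSig1 : 1 ≤ ∑ k ∈ Finset.range (m+1), (E.card).choose k := by
      calc 1 = (E.card).choose 0 := by simp
        _ ≤ _ := Finset.single_le_sum (f := fun k => (E.card).choose k)
            (fun k _ => Nat.zero_le _) (Finset.mem_range.mpr (by omega))
    have hP1 : 1 ≤ Nat.card A ^ m := Nat.one_le_pow _ _ Nat.card_pos
    have hlog : Real.log (numPatterns x' E) ≤ Real.log (numPatterns x E)
        + Real.log (∑ k ∈ Finset.range (m+1), ((E.card).choose k : ℝ))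
        + m * Real.log (Nat.card A) := by
      have h2 : Real.log (numPatterns x' E) ≤ Real.log
          ((numPatterns x E * (∑ k ∈ Finset.range (m+1), (E.card).choose k)
            * Nat.card A ^ m : ℕ) : ℝ) := by
        apply Real.log_le_log (by exact_mod_cast numPatterns_pos x' E)
        exact_mod_cast hpat
      refine le_trans h2 (le_of_eq ?_)
      have hNne : (numPatterns x E : ℝ) ≠ 0 := by
        have := numPatterns_pos x E; positivity
      have hSne : ((∑ k ∈ Finset.range (m+1), (E.card).choose k : ℕ) : ℝ) ≠ 0 := by
        have := hSig1; positivity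
      have hPne : ((Nat.card A ^ m : ℕ) : ℝ) ≠ 0 := by
        have := hP1; positivity
      push_cast
      push_cast at hNne hSne hPne
      rw [Real.log_mul (mul_ne_zero hNne hSne) hPne, Real.log_mul hNne hSne,
        Real.log_pow]
    have hSigbound : Real.log (∑ k ∈ Finset.range (m+1), ((E.card).choose k : ℝ))
        ≤ E.card * Real.binEntropy (2 * δ) :=
      sum_choose_le_exp E.card m (2 * δ) (by linarith) (by linarith) hmle
    have hmA : (m : ℝ) * Real.log (Nat.card A) ≤ 2 * δ * E.card * Real.log (Nat.card A) :=
      mul_le_mul_of_nonneg_right hmle hlogA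
    have hfinal : Real.log (numPatterns x' E)
        ≤ Real.log (numPatterns x E) + E.card * C := by
      rw [hCalt]
      have : (E.card : ℝ) * (2 * δ * Real.log (Nat.card A) + Real.binEntropy (2 * δ))
          = 2 * δ * E.card * Real.log (Nat.card A) + E.card * Real.binEntropy (2 * δ) := by
        ring
      rw [this]
      linarith [hlog, hSigbound, hmA]
    have h2 : Real.log (numPatterns x E) / E.card + C
        = (Real.log (numPatterns x E) + E.card * C) / E.card := by
      field_simp
    rw [h2]
    gcongr
  -- Step 6: limsup comparison
  have hu0 : ∀ n, 0 ≤ Real.log (numPatterns x (F n)) / (F n).card := by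
    intro n
    apply div_nonneg _ (Nat.cast_nonneg _)
    apply Real.log_nonneg
    exact_mod_cast numPatterns_pos x (F n)
  have hu'0 : ∀ n, 0 ≤ Real.log (numPatterns x' (F n)) / (F n).card := by
    intro n
    apply div_nonneg _ (Nat.cast_nonneg _)
    apply Real.log_nonneg
    exact_mod_cast numPatterns_pos x' (F n)
  have huM : ∀ n, Real.log (numPatterns x (F n)) / (F n).card ≤ Real.log (Nat.card A) := by
    intro n
    have hcard : (0:ℝ) < (F n).card := by exact_mod_cast Finset.card_pos.mpr (hne n)
    rw [div_le_iff₀ hcard]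
    calc Real.log (numPatterns x (F n))
        ≤ Real.log ((Nat.card A ^ (F n).card : ℕ) : ℝ) := by
          apply Real.log_le_log (by exact_mod_cast numPatterns_pos x (F n))
          exact_mod_cast numPatterns_le x (F n)
      _ = Real.log (Nat.card A) * (F n).card := by
          push_cast
          rw [Real.log_pow]
          ring
  have hbdd : IsBoundedUnder (· ≤ ·) atTop
      (fun n => Real.log (numPatterns x (F n)) / (F n).card) :=
    isBoundedUnder_of ⟨Real.log (Nat.card A), fun n => huM n⟩
  have hcobdd : IsCoboundedUnder (· ≤ ·) atTop
      (fun n => Real.log (numPatterns x (F n)) / (F n).card) :=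
    (isBoundedUnder_of ⟨0, fun n => hu0 n⟩ :
      IsBoundedUnder (· ≥ ·) atTop _).isCoboundedUnder_le
  have hcobdd' : IsCoboundedUnder (· ≤ ·) atTop
      (fun n => Real.log (numPatterns x' (F n)) / (F n).card) :=
    (isBoundedUnder_of ⟨0, fun n => hu'0 n⟩ :
      IsBoundedUnder (· ≥ ·) atTop _).isCoboundedUnder_le
  have h1 : orbitEntropy F x' ≤ Filter.limsup
      (fun n => Real.log (numPatterns x (F n)) / (F n).card + C) atTop := by
    exact limsup_le_limsup hmain hcobdd'
      (isBoundedUnder_of ⟨Real.log (Nat.card A) + C,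
        fun n => by linarith [huM n]⟩)
  have h2 : Filter.limsup
      (fun n => Real.log (numPatterns x (F n)) / (F n).card + C) atTop
      = orbitEntropy F x + C :=
    limsup_add_const atTop _ C hbdd hcobdd
  calc orbitEntropy F x' ≤ _ := h1
    _ = orbitEntropy F x + C := h2

theorem entropy_continuous_in_weyl {G A : Type*} [Group G] [Countable G] [DecidableEq G]
    [Finite A]
    (F : ℕ → Finset G) (hne : ∀ n, (F n).Nonempty)
    (hF : ∀ a : G, Tendsto
      (fun n => ((((F n).image (a * ·)) ∆ (F n)).card : ℝ) / (F n).card) atTop (nhds 0)) :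
    ∀ ε > (0 : ℝ), ∃ δ : ℝ, 0 < δ ∧ δ < 1 / 4 ∧ binEntropy (2 * δ) < ε ∧
      ∀ x x' : G → A, upperBanachDensity {g : G | x g ≠ x' g} < δ →
        |orbitEntropy F x - orbitEntropy F x'| ≤
          2 * δ * Real.log (Nat.card A) + Real.log 2 * binEntropy (2 * δ) := by
  intro ε hε
  have hcont : Continuous (fun t : ℝ => binEntropy (2 * t)) := by
    have h : (fun t : ℝ => binEntropy (2 * t))
        = fun t => Real.binEntropy (2 * t) / Real.log 2 := by
      funext t; rw [binEntropy_eq]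
    rw [h]
    exact (Real.binEntropy_continuous.comp (continuous_const.mul continuous_id)).div_const _
  have h0 : (fun t : ℝ => binEntropy (2 * t)) 0 = 0 := by
    simp [binEntropy_eq]
  have hev : ∀ᶠ t in nhds (0:ℝ), binEntropy (2 * t) < ε := by
    have hca := hcont.continuousAt (x := 0)
    rw [ContinuousAt] at hca
    have h00 : binEntropy (2 * (0:ℝ)) = 0 := by simp [binEntropy_eq]
    rw [h00] at hca
    exact hca.eventually (gt_mem_nhds hε)
  obtain ⟨η, hη, hball⟩ := Metric.eventually_nhds_iff.mp hev
  set δ := min (η / 2) (1/8 : ℝ) with hδ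
  have hδ0 : 0 < δ := lt_min (by linarith) (by norm_num)
  have hδ4 : δ < 1 / 4 := lt_of_le_of_lt (min_le_right _ _) (by norm_num)
  have hδε : binEntropy (2 * δ) < ε := by
    apply hball
    rw [Real.dist_eq, sub_zero, abs_of_pos hδ0]
    calc δ ≤ η / 2 := min_le_left _ _
      _ < η := by linarith
  refine ⟨δ, hδ0, hδ4, hδε, ?_⟩
  intro x x' hxx
  have hsym : {g : G | x' g ≠ x g} = {g : G | x g ≠ x' g} := by
    ext g; exact ne_comm
  have h1 := orbitEntropy_le_aux F hne hF δ hδ0 hδ4 x x' hxx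
  have h2 := orbitEntropy_le_aux F hne hF δ hδ0 hδ4 x' x (by rw [hsym]; exact hxx)
  rw [abs_sub_le_iff]
  constructor <;> linarith
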